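/- Let a and b be nonzero real numbers and n a positive integer. Then the S-sum S_{2,1}(a,b;n) = Σ_{j=1}^{n} (a^j/j^2) Σ_{i=1}^{j} b^i/i has the integral representation S_{2,1}(a,b;n) = ∫_0^{ab} (1/(x − a)) [ ∫_a^{x} (1/y) ∫_0^{y} (z^n − 1)/(z − 1) dz dy ] dx, where the inner double integral vanishes at x = a, so the integrand extends continuously across x = a. -/

import Mathlib

open intervalIntegral

/-- The generalized harmonic sum (`S`-sum). -/
noncomputable def Ssum : List (ℕ × ℝ) → ℕ → ℝ
  | [], _ => 1
  | (a, x) :: p, n => ∑ i ∈ Finset.Icc 1 n, x ^ i / (i : ℝ) ^ a * Ssum p i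

lemma sum_Icc_one {M : Type*} [AddCommMonoid M] (n : ℕ) (f : ℕ → M) :
    ∑ i ∈ Finset.Icc 1 n, f i = ∑ k ∈ Finset.range n, f (k + 1) := by
  rw [← Finset.Ico_add_one_right_eq_Icc, Finset.sum_Ico_eq_sum_range]
  simp [add_comm]

lemma int_congr_off (c : ℝ) {f g : ℝ → ℝ} (h : ∀ x, x ≠ c → f x = g x) (u v : ℝ) :
    ∫ x in u..v, f x = ∫ x in u..v, g x := by
  apply intervalIntegral.integral_congr_ae
  filter_upwards [MeasureTheory.compl_mem_ae_iff.mpr (MeasureTheory.measure_singleton c)]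
    with x hx _
  exact h x hx

lemma lemA (n : ℕ) (y : ℝ) :
    (∫ z in (0:ℝ)..y, (z ^ n - 1) / (z - 1)) =
      ∑ k ∈ Finset.range n, y ^ (k + 1) / (k + 1) := by
  rw [int_congr_off 1 (f := fun z => (z ^ n - 1) / (z - 1))
      (g := fun z => ∑ k ∈ Finset.range n, z ^ k)
      (fun z hz => (geom_sum_eq hz n).symm)]
  rw [intervalIntegral.integral_finset_sum
      (fun k _ => (continuous_pow k).intervalIntegrable _ _)]
  refine Finset.sum_congr rfl fun k _ => ?_
  rw [integral_pow]
  simp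

lemma lemB (a : ℝ) (n : ℕ) (x : ℝ) :
    (∫ y in a..x, (1 / y) * ∑ k ∈ Finset.range n, y ^ (k + 1) / (k + 1)) =
      ∑ k ∈ Finset.range n, (x ^ (k + 1) - a ^ (k + 1)) / ((k + 1) * (k + 1)) := by
  rw [int_congr_off 0
      (f := fun y => (1 / y) * ∑ k ∈ Finset.range n, y ^ (k + 1) / (k + 1))
      (g := fun y => ∑ k ∈ Finset.range n, y ^ k / (k + 1))
      (fun y hy => by
        rw [Finset.mul_sum]
        refine Finset.sum_congr rfl fun k _ => ?_
        field_simp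
        ring)]
  rw [intervalIntegral.integral_finset_sum
      (fun k _ => ((continuous_pow k).div_const _).intervalIntegrable _ _)]
  refine Finset.sum_congr rfl fun k _ => ?_
  rw [intervalIntegral.integral_div, integral_pow]
  rw [div_div]

lemma lemC (a c : ℝ) (n : ℕ) :
    (∫ x in (0:ℝ)..c, (1 / (x - a)) *
        ∑ k ∈ Finset.range n, (x ^ (k + 1) - a ^ (k + 1)) / ((k + 1) * (k + 1))) =
      ∑ k ∈ Finset.range n, (1 / (((k:ℝ) + 1) * ((k:ℝ) + 1))) *
        ∑ j ∈ Finset.range (k + 1), a ^ (k - j) * (c ^ (j + 1) / (j + 1)) := by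
  rw [int_congr_off a
      (f := fun x => (1 / (x - a)) *
        ∑ k ∈ Finset.range n, (x ^ (k + 1) - a ^ (k + 1)) / ((k + 1) * (k + 1)))
      (g := fun x => ∑ k ∈ Finset.range n, (1 / (((k:ℝ) + 1) * ((k:ℝ) + 1))) *
        ∑ j ∈ Finset.range (k + 1), x ^ j * a ^ (k - j))
      (fun x hx => by
        rw [Finset.mul_sum]
        refine Finset.sum_congr rfl fun k _ => ?_
        have hxa : x - a ≠ 0 := sub_ne_zero.mpr hx
        have hg := geom_sum₂_mul x a (k + 1)
        simp only [Nat.add_sub_cancel] at hg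
        have : (∑ j ∈ Finset.range (k + 1), x ^ j * a ^ (k - j)) =
            (x ^ (k + 1) - a ^ (k + 1)) / (x - a) := by
          rw [eq_div_iff hxa]
          simpa using hg
        rw [this]
        ring)]
  rw [intervalIntegral.integral_finset_sum
      (fun k _ => (Continuous.intervalIntegrable (by fun_prop) _ _))]
  refine Finset.sum_congr rfl fun k _ => ?_
  rw [intervalIntegral.integral_const_mul]
  congr 1
  rw [intervalIntegral.integral_finset_sum
      (fun j _ => (Continuous.intervalIntegrable (by fun_prop) _ _))]
  refine Finset.sum_congr rfl fun j _ => ?_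
  rw [intervalIntegral.integral_mul_const, integral_pow]
  simp [mul_comm]

/-- Integral representation of `S_{2,1}(a,b;n)`:
`S_{2,1}(a,b;n) = ∫_0^{ab} (1/(x−a)) ∫_a^x (1/y) ∫_0^y (z^n−1)/(z−1) dz dy dx`
(all integrals oriented). -/
theorem ssum_two_one_integral_rep (a b : ℝ) (ha : a ≠ 0) (hb : b ≠ 0)
    (n : ℕ) (hn : 1 ≤ n) :
    Ssum [(2, a), (1, b)] n =
      ∫ x in (0:ℝ)..(a * b), (1 / (x - a)) *
        ∫ y in a..x, (1 / y) * ∫ z in (0:ℝ)..y, (z ^ n - 1) / (z - 1) := by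
  simp only [lemA n, lemB a n, lemC a (a * b) n]
  simp only [Ssum, sum_Icc_one, pow_one]
  refine Finset.sum_congr rfl fun k _ => ?_
  rw [Finset.mul_sum, Finset.mul_sum]
  refine Finset.sum_congr rfl fun j hj => ?_
  have hjk : j ≤ k := Nat.lt_succ_iff.mp (Finset.mem_range.mp hj)
  have hpow : a ^ (k - j) * (a * b) ^ (j + 1) = a ^ (k + 1) * b ^ (j + 1) := by
    rw [mul_pow, ← mul_assoc, ← pow_add]
    congr 2
    omega
  push_cast
  field_simp
  rw [← hpow]
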